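/- Let Q be a quiver on n vertices with skew-symmetric exchange matrix B. If Q is mutation-acyclic with connected underlying graph, and M_Q denotes the Markov invariant, then in the acyclic case (vertices ordered compatibly with arrows, upper-triangular entries b_{ij} ≥ 0 for i < j), we have M_Q = ∑_{i<j} b_{ij}² + ∑_O wt(O) where the second sum is over cycles O of the underlying graph with exactly one backward edge, and wt(O) is the product of the |b|-weights along the cycle. In particular, for a connected acyclic quiver on n vertices, M_Q ≥ n - 1. -/

import Mathlib

open Matrix

open scoped Classical

lemma snoc_strictMono {n m : ℕ} {v : Fin (m+1) → Fin n} {k : Fin n}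
    (hv : StrictMono v) (hk : v (Fin.last m) < k) : StrictMono (Fin.snoc v k) := by
  rw [Fin.strictMono_iff_lt_succ]
  intro j
  induction j using Fin.lastCases with
  | last =>
    simp only [Fin.succ_last, Fin.snoc_castSucc, Fin.snoc_last]
    exact hk
  | cast i =>
    simp only [Fin.succ_castSucc, Fin.snoc_castSucc]
    exact hv (Fin.castSucc_lt_succ (i := i))

lemma chainSum {n : ℕ} (N : Matrix (Fin n) (Fin n) ℤ) (hN : ∀ i j : Fin n, ¬ i < j → N i j = 0) :
    ∀ (m : ℕ) (i k : Fin n), (N ^ m) i k =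
      ∑ v ∈ Finset.univ.filter (fun v : Fin (m+1) → Fin n =>
          StrictMono v ∧ v 0 = i ∧ v (Fin.last m) = k),
        ∏ j : Fin m, N (v j.castSucc) (v j.succ) := by
  intro m
  induction m with
  | zero =>
    intro i k
    rw [pow_zero]
    by_cases hik : i = k
    · subst hik
      have hfil : (Finset.univ.filter (fun v : Fin 1 → Fin n =>
          StrictMono v ∧ v 0 = i ∧ v (Fin.last 0) = i)) = {fun _ => i} := by
        ext v
        simp only [Finset.mem_filter, Finset.mem_univ, true_and, Finset.mem_singleton]
        constructor
        · rintro ⟨-, h0, -⟩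
          funext j
          have : j = 0 := Subsingleton.elim _ _
          rw [this, h0]
        · rintro rfl
          exact ⟨Subsingleton.strictMono _, rfl, rfl⟩
      rw [hfil, Finset.sum_singleton, one_apply_eq]
      simp
    · have hfil : (Finset.univ.filter (fun v : Fin 1 → Fin n =>
          StrictMono v ∧ v 0 = i ∧ v (Fin.last 0) = k)) = ∅ := by
        ext v
        simp only [Finset.mem_filter, Finset.mem_univ, true_and, Finset.notMem_empty, iff_false]
        rintro ⟨-, h0, hlast⟩
        exact hik (h0 ▸ hlast ▸ rfl)
      rw [hfil, Finset.sum_empty, one_apply_ne hik]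
  | succ m ih =>
    intro i k
    rw [pow_succ, mul_apply]
    have step1 : ∀ l, (N ^ m) i l * N l k =
        ∑ v ∈ Finset.univ.filter (fun v : Fin (m+1) → Fin n =>
          StrictMono v ∧ v 0 = i ∧ v (Fin.last m) = l),
          (∏ j : Fin m, N (v j.castSucc) (v j.succ)) * N l k := by
      intro l; rw [ih, Finset.sum_mul]
    simp_rw [step1]
    rw [← Finset.sum_filter_of_ne (p := fun l => l < k) (by
      intro l _ hne
      by_contra hlt
      rw [hN l k hlt] at hne
      simp at hne)]
    rw [Finset.sum_sigma']
    refine Finset.sum_bij' (fun p _ => Fin.snoc p.2 k)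
      (fun w _ => ⟨w (Fin.castSucc (Fin.last m)), Fin.init w⟩) ?_ ?_ ?_ ?_ ?_
    · rintro ⟨l, v⟩ hp
      simp only [Finset.mem_sigma, Finset.mem_filter, Finset.mem_univ, true_and] at hp
      obtain ⟨hlk, hv, h0, hlast⟩ := hp
      simp only [Finset.mem_filter, Finset.mem_univ, true_and]
      refine ⟨snoc_strictMono hv (hlast ▸ hlk), ?_, ?_⟩
      · have : (0 : Fin (m+2)) = Fin.castSucc 0 := rfl
        rw [this, Fin.snoc_castSucc, h0]
      · simp
    · intro w hw
      simp only [Finset.mem_filter, Finset.mem_univ, true_and] at hw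
      obtain ⟨hw, h0, hlast⟩ := hw
      simp only [Finset.mem_sigma, Finset.mem_filter, Finset.mem_univ, true_and]
      refine ⟨?_, ?_, ?_, rfl⟩
      · rw [← hlast, ← Fin.succ_last]
        exact hw (Fin.castSucc_lt_succ)
      · exact hw.comp Fin.strictMono_castSucc
      · rw [← h0]; rfl
    · rintro ⟨l, v⟩ hp
      simp only [Finset.mem_sigma, Finset.mem_filter, Finset.mem_univ, true_and] at hp
      obtain ⟨hlk, hv, h0, hlast⟩ := hp
      refine Sigma.ext ?_ ?_
      · simp only [Fin.snoc_castSucc, hlast]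
      · simp only [Fin.init_snoc]; rfl
    · intro w hw
      simp only [Finset.mem_filter, Finset.mem_univ, true_and] at hw
      obtain ⟨-, -, hlast⟩ := hw
      show Fin.snoc (Fin.init w) k = w
      rw [← hlast]
      exact Fin.snoc_init_self w
    · rintro ⟨l, v⟩ hp
      simp only [Finset.mem_sigma, Finset.mem_filter, Finset.mem_univ, true_and] at hp
      obtain ⟨hlk, hv, h0, hlast⟩ := hp
      rw [Fin.prod_univ_castSucc (f := fun j : Fin (m+1) =>
        N ((Fin.snoc v k : Fin (m+2) → Fin n) j.castSucc) ((Fin.snoc v k : Fin (m+2) → Fin n) j.succ))]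
      congr 1
      · apply Finset.prod_congr rfl
        intro j _
        rw [Fin.succ_castSucc, Fin.snoc_castSucc, Fin.snoc_castSucc]
      · rw [Fin.succ_last, Fin.snoc_last, Fin.snoc_castSucc, hlast]

lemma mergeEndpoints {n m : ℕ} (g : (Fin (m+1) → Fin n) → ℤ) :
    (∑ i : Fin n, ∑ k : Fin n, ∑ v ∈ Finset.univ.filter
      (fun v : Fin (m+1) → Fin n => StrictMono v ∧ v 0 = i ∧ v (Fin.last m) = k), g v)
    = ∑ v ∈ Finset.univ.filter (fun v : Fin (m+1) → Fin n => StrictMono v), g v := by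
  have h1 : ∀ i k : Fin n, (Finset.univ.filter
      (fun v : Fin (m+1) → Fin n => StrictMono v ∧ v 0 = i ∧ v (Fin.last m) = k))
      = (Finset.univ.filter (fun v : Fin (m+1) → Fin n => StrictMono v)).filter
          (fun v => v 0 = i ∧ v (Fin.last m) = k) := by
    intro i k; rw [Finset.filter_filter]
  calc (∑ i : Fin n, ∑ k : Fin n, ∑ v ∈ Finset.univ.filter
      (fun v : Fin (m+1) → Fin n => StrictMono v ∧ v 0 = i ∧ v (Fin.last m) = k), g v)
      = ∑ i : Fin n, ∑ k : Fin n, ∑ v ∈ Finset.univ.filter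
          (fun v : Fin (m+1) → Fin n => StrictMono v),
          (if v 0 = i ∧ v (Fin.last m) = k then g v else 0) := by
        refine Finset.sum_congr rfl fun i _ => Finset.sum_congr rfl fun k _ => ?_
        rw [h1 i k, Finset.sum_filter]
    _ = ∑ v ∈ Finset.univ.filter (fun v : Fin (m+1) → Fin n => StrictMono v),
          ∑ i : Fin n, ∑ k : Fin n, (if v 0 = i ∧ v (Fin.last m) = k then g v else 0) :=
        (Finset.sum_congr rfl fun i _ => Finset.sum_comm).trans Finset.sum_comm
    _ = ∑ v ∈ Finset.univ.filter (fun v : Fin (m+1) → Fin n => StrictMono v), g v := by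
        refine Finset.sum_congr rfl fun v _ => ?_
        have hstep : ∀ i : Fin n, (∑ k : Fin n,
            (if v 0 = i ∧ v (Fin.last m) = k then g v else 0))
            = if v 0 = i then g v else 0 := by
          intro i
          by_cases h : v 0 = i
          · simp [h, Finset.sum_ite_eq]
          · simp [h]
        simp_rw [hstep]
        simp [Finset.sum_ite_eq]

lemma noStrictMono {a b : ℕ} (h : b < a) (v : Fin a → Fin b) : ¬ StrictMono v := by
  intro hv
  have := Fintype.card_le_of_injective v hv.injective
  simp only [Fintype.card_fin] at this
  omega

theorem stmt9 (n : ℕ) (B U : Matrix (Fin n) (Fin n) ℤ)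
    (hskew : Bᵀ = -B)
    (hcompat : ∀ i j : Fin n, i < j → 0 ≤ B i j)
    (hconn : (SimpleGraph.fromRel (fun i j => B i j ≠ 0)).Connected)
    (hUt : ∀ i j : Fin n, j < i → U i j = 0) (hUd : ∀ i, U i i = 1)
    (hUB : Uᵀ - U = B)
    (M : ℤ)
    (hM : M = (n : ℤ) +
      (((Polynomial.X : Polynomial ℤ) • U.map Polynomial.C - Uᵀ.map Polynomial.C).det).coeff (n - 1)) :
    M = (∑ i : Fin n, ∑ j : Fin n, (if i < j then (B i j) ^ 2 else 0))
        + (∑ m ∈ Finset.range n,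
            ∑ u ∈ Finset.univ.filter
              (fun u : Fin (m + 3) → Fin n => StrictMono u ∧
                (∀ j : Fin (m + 2), 0 < B (u j.castSucc) (u j.succ)) ∧
                0 < B (u 0) (u (Fin.last (m + 2)))),
              (∏ j : Fin (m + 2), B (u j.castSucc) (u j.succ))
                * B (u 0) (u (Fin.last (m + 2))))
      ∧ (n : ℤ) - 1 ≤ M := by
  -- basic setup
  obtain ⟨v0⟩ := hconn.nonempty
  have hn0 : 0 < n := Fin.pos v0
  obtain ⟨n', rfl⟩ : ∃ n', n = n' + 1 := ⟨n - 1, by omega⟩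
  -- relation between U and B above the diagonal
  have hB' : ∀ i j : Fin (n'+1), i < j → U i j = -B i j := by
    intro i j h
    have h2 : (Uᵀ - U) i j = B i j := by rw [hUB]
    rw [Matrix.sub_apply, Matrix.transpose_apply, hUt j i h] at h2
    omega
  set N : Matrix (Fin (n'+1)) (Fin (n'+1)) ℤ := U - 1 with hNdef
  have hNzero : ∀ i j : Fin (n'+1), ¬ i < j → (-N) i j = 0 := by
    intro i j h
    rcases eq_or_lt_of_le (not_lt.mp h) with h1 | h1
    · simp [hNdef, Matrix.sub_apply, Matrix.one_apply, ← h1, hUd]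
    · simp [hNdef, Matrix.sub_apply, Matrix.one_apply_ne (ne_of_gt h1), hUt i j h1]
  have hNB : ∀ i j : Fin (n'+1), i < j → (-N) i j = B i j := by
    intro i j h
    simp [hNdef, Matrix.sub_apply, Matrix.one_apply_ne (ne_of_lt h), hB' i j h]
  set V : Matrix (Fin (n'+1)) (Fin (n'+1)) ℤ := ∑ m ∈ Finset.range (n'+2), (-N) ^ m with hVdef
  -- V is the inverse of U
  have hz : (-N) ^ (n'+2) = 0 := by
    ext i k
    rw [chainSum _ hNzero (n'+2) i k, Matrix.zero_apply]
    apply Finset.sum_eq_zero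
    intro v hv
    simp only [Finset.mem_filter, Finset.mem_univ, true_and] at hv
    exact absurd hv.1 (noStrictMono (show n'+1 < n'+3 by omega) v)
  have hUV : U * V = 1 := by
    have h1 : ((-N) - 1) * V = -1 := by
      rw [hVdef, mul_geom_sum, hz, zero_sub]
    have hU_eq : U = -((-N) - 1) := by
      rw [hNdef]; abel
    rw [hU_eq, neg_mul, h1, neg_neg]
  -- the determinant is the characteristic polynomial of V * Uᵀ
  have hfact : (U.map Polynomial.C) * charmatrix (V * Uᵀ)
      = (Polynomial.X : Polynomial ℤ) • U.map Polynomial.C - Uᵀ.map Polynomial.C := by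
    rw [charmatrix, Matrix.mul_sub]
    congr 1
    · ext i j
      rw [Matrix.scalar_apply, Matrix.mul_diagonal, Matrix.smul_apply, Matrix.map_apply,
        smul_eq_mul, mul_comm]
    · rw [RingHom.mapMatrix_apply, ← Matrix.map_mul, ← Matrix.mul_assoc, hUV, Matrix.one_mul]
  have hdetU : (U.map Polynomial.C).det = 1 := by
    have h2 : U.det = 1 := by
      rw [Matrix.det_of_upperTriangular (fun i j h => hUt i j h)]
      simp [hUd]
    have h3 := RingHom.map_det (Polynomial.C : ℤ →+* Polynomial ℤ) U
    rw [RingHom.mapMatrix_apply] at h3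
    rw [← h3, h2, Polynomial.C_1]
  have hdet : ((Polynomial.X : Polynomial ℤ) • U.map Polynomial.C - Uᵀ.map Polynomial.C).det
      = (V * Uᵀ).charpoly := by
    rw [← hfact, Matrix.det_mul, hdetU, one_mul, Matrix.charpoly]
  -- M = n - trace
  have hMn : M = ((n'+1 : ℕ) : ℤ) - (V * Uᵀ).trace := by
    rw [hM, hdet]
    have h4 := Matrix.trace_eq_neg_charpoly_coeff (V * Uᵀ)
    rw [Fintype.card_fin] at h4
    rw [show (V * Uᵀ).charpoly.coeff (n' + 1 - 1) = -(V * Uᵀ).trace from by rw [h4]; ring]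
    ring
  -- trace expansion
  have htrace : (V * Uᵀ).trace
      = ∑ m ∈ Finset.range (n'+2), ∑ i : Fin (n'+1), ∑ k : Fin (n'+1), ((-N) ^ m) i k * U i k := by
    have e1 : (V * Uᵀ).trace = ∑ i : Fin (n'+1), ∑ k : Fin (n'+1), V i k * U i k := by
      simp [Matrix.trace, Matrix.diag, Matrix.mul_apply, Matrix.transpose_apply]
    have e2 : ∀ i k : Fin (n'+1), V i k = ∑ m ∈ Finset.range (n'+2), ((-N) ^ m) i k := by
      intro i k
      rw [hVdef, Matrix.sum_apply]
    rw [e1]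
    simp_rw [e2, Finset.sum_mul]
    exact (Finset.sum_congr rfl fun i _ => Finset.sum_comm).trans Finset.sum_comm
  -- evaluation of each trace term
  have hT : ∀ m : ℕ, (∑ i : Fin (n'+1), ∑ k : Fin (n'+1), ((-N) ^ m) i k * U i k)
      = ∑ v ∈ Finset.univ.filter (fun v : Fin (m+1) → Fin (n'+1) => StrictMono v),
          (∏ j : Fin m, B (v j.castSucc) (v j.succ)) * U (v 0) (v (Fin.last m)) := by
    intro m
    have e3 : ∀ i k : Fin (n'+1), ((-N) ^ m) i k * U i k
        = ∑ v ∈ Finset.univ.filter (fun v : Fin (m+1) → Fin (n'+1) =>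
            StrictMono v ∧ v 0 = i ∧ v (Fin.last m) = k),
          (∏ j : Fin m, B (v j.castSucc) (v j.succ)) * U (v 0) (v (Fin.last m)) := by
      intro i k
      rw [chainSum _ hNzero m i k, Finset.sum_mul]
      refine Finset.sum_congr rfl fun v hv => ?_
      simp only [Finset.mem_filter, Finset.mem_univ, true_and] at hv
      rw [hv.2.1, hv.2.2]
      congr 1
      refine Finset.prod_congr rfl fun j _ => ?_
      exact hNB _ _ (hv.1 (Fin.castSucc_lt_succ (i := j)))
    simp_rw [e3]
    exact mergeEndpoints _
  -- m = 0 term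
  have hT0 : (∑ i : Fin (n'+1), ∑ k : Fin (n'+1), ((-N) ^ 0) i k * U i k) = ((n'+1 : ℕ) : ℤ) := by
    rw [hT 0]
    have hful : (Finset.univ.filter (fun v : Fin 1 → Fin (n'+1) => StrictMono v)) = Finset.univ := by
      ext v; simp [Subsingleton.strictMono v]
    rw [hful]
    have hone : ∀ v : Fin 1 → Fin (n'+1),
        (∏ j : Fin 0, B (v j.castSucc) (v j.succ)) * U (v 0) (v (Fin.last 0)) = 1 := by
      intro v
      have : (Fin.last 0) = (0 : Fin 1) := rfl
      simp [this, hUd]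
    simp_rw [hone]
    simp [Finset.card_univ]
  -- m = 1 term
  have hT1 : (∑ i : Fin (n'+1), ∑ k : Fin (n'+1), ((-N) ^ 1) i k * U i k)
      = -(∑ i : Fin (n'+1), ∑ j : Fin (n'+1), (if i < j then (B i j) ^ 2 else 0)) := by
    have hpow1 : ∀ i k : Fin (n'+1), ((-N) ^ 1) i k * U i k
        = -(if i < k then (B i k) ^ 2 else 0) := by
      intro i k
      rw [pow_one]
      by_cases h : i < k
      · rw [if_pos h, hNB i k h, hB' i k h]; ring
      · rw [if_neg h, hNzero i k h, zero_mul, neg_zero]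
    simp_rw [hpow1]
    simp
  -- m ≥ 2 terms
  have hT2 : ∀ m' : ℕ, (∑ i : Fin (n'+1), ∑ k : Fin (n'+1), ((-N) ^ (m' + 2)) i k * U i k)
      = -(∑ u ∈ Finset.univ.filter (fun u : Fin (m' + 3) → Fin (n'+1) => StrictMono u),
          (∏ j : Fin (m' + 2), B (u j.castSucc) (u j.succ))
            * B (u 0) (u (Fin.last (m' + 2)))) := by
    intro m'
    rw [hT (m' + 2), ← Finset.sum_neg_distrib]
    refine Finset.sum_congr rfl fun v hv => ?_
    simp only [Finset.mem_filter, Finset.mem_univ, true_and] at hv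
    have h0l : v 0 < v (Fin.last (m' + 2)) := hv (by
      rw [Fin.lt_iff_val_lt_val]
      simp [Fin.last])
    rw [hB' _ _ h0l]
    ring
  -- assemble the trace
  have htr2 : (V * Uᵀ).trace = ((n'+1 : ℕ) : ℤ)
      - (∑ i : Fin (n'+1), ∑ j : Fin (n'+1), (if i < j then (B i j) ^ 2 else 0))
      - ∑ m' ∈ Finset.range n', ∑ u ∈ Finset.univ.filter
          (fun u : Fin (m' + 3) → Fin (n'+1) => StrictMono u),
          (∏ j : Fin (m' + 2), B (u j.castSucc) (u j.succ))
            * B (u 0) (u (Fin.last (m' + 2))) := by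
    rw [htrace]
    rw [show n'+2 = (n' + 1) + 1 from rfl]
    rw [Finset.sum_range_succ' _ (n' + 1), Finset.sum_range_succ' _ n']
    rw [hT0, hT1]
    have : ∀ m' ∈ Finset.range n', (∑ i : Fin (n'+1), ∑ k : Fin (n'+1), ((-N) ^ (m' + 1 + 1)) i k * U i k)
        = -(∑ u ∈ Finset.univ.filter (fun u : Fin (m' + 3) → Fin (n'+1) => StrictMono u),
          (∏ j : Fin (m' + 2), B (u j.castSucc) (u j.succ))
            * B (u 0) (u (Fin.last (m' + 2)))) := by
      intro m' _
      exact hT2 m'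
    rw [Finset.sum_congr rfl this, Finset.sum_neg_distrib]
    ring
  -- remove the positivity filter from the target sum
  have hfilt : ∀ m' : ℕ, (∑ u ∈ Finset.univ.filter
        (fun u : Fin (m' + 3) → Fin (n'+1) => StrictMono u ∧
          (∀ j : Fin (m' + 2), 0 < B (u j.castSucc) (u j.succ)) ∧
          0 < B (u 0) (u (Fin.last (m' + 2)))),
        (∏ j : Fin (m' + 2), B (u j.castSucc) (u j.succ))
          * B (u 0) (u (Fin.last (m' + 2))))
      = ∑ u ∈ Finset.univ.filter (fun u : Fin (m' + 3) → Fin (n'+1) => StrictMono u),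
          (∏ j : Fin (m' + 2), B (u j.castSucc) (u j.succ))
            * B (u 0) (u (Fin.last (m' + 2))) := by
    intro m'
    rw [← Finset.filter_filter]
    apply Finset.sum_filter_of_ne
    intro v hv hne
    simp only [Finset.mem_filter, Finset.mem_univ, true_and] at hv
    have h0l : v 0 < v (Fin.last (m' + 2)) := hv (by
      rw [Fin.lt_iff_val_lt_val]
      simp [Fin.last])
    constructor
    · intro j
      rcases (hcompat _ _ (hv (Fin.castSucc_lt_succ (i := j)))).lt_or_eq with h | h
      · exact h
      · exfalso
        apply hne
        rw [Finset.prod_eq_zero (Finset.mem_univ j) h.symm, zero_mul]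
    · rcases (hcompat _ _ h0l).lt_or_eq with h | h
      · exact h
      · exfalso
        apply hne
        rw [← h, mul_zero]
  -- the top term of the target sum vanishes
  have htop : (∑ u ∈ Finset.univ.filter
        (fun u : Fin (n' + 3) → Fin (n'+1) => StrictMono u ∧
          (∀ j : Fin (n' + 2), 0 < B (u j.castSucc) (u j.succ)) ∧
          0 < B (u 0) (u (Fin.last (n' + 2)))),
        (∏ j : Fin (n' + 2), B (u j.castSucc) (u j.succ))
          * B (u 0) (u (Fin.last (n' + 2)))) = 0 := by
    apply Finset.sum_eq_zero
    intro v hv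
    simp only [Finset.mem_filter, Finset.mem_univ, true_and] at hv
    exfalso
    have hcard := Fintype.card_le_of_injective v hv.1.injective
    simp only [Fintype.card_fin] at hcard
    linarith
  -- main equality
  have hmain : M = (∑ i : Fin (n'+1), ∑ j : Fin (n'+1), (if i < j then (B i j) ^ 2 else 0))
      + (∑ m ∈ Finset.range (n'+1),
          ∑ u ∈ Finset.univ.filter
            (fun u : Fin (m + 3) → Fin (n'+1) => StrictMono u ∧
              (∀ j : Fin (m + 2), 0 < B (u j.castSucc) (u j.succ)) ∧
              0 < B (u 0) (u (Fin.last (m + 2)))),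
            (∏ j : Fin (m + 2), B (u j.castSucc) (u j.succ))
              * B (u 0) (u (Fin.last (m + 2)))) := by
    rw [Finset.sum_range_succ, htop,
      add_zero]
    rw [Finset.sum_congr rfl (fun m' _ => hfilt m')]
    rw [hMn, htr2]
    ring
  refine ⟨hmain, ?_⟩
  -- the inequality
  have hCyc : 0 ≤ (∑ m ∈ Finset.range (n'+1),
      ∑ u ∈ Finset.univ.filter
        (fun u : Fin (m + 3) → Fin (n'+1) => StrictMono u ∧
          (∀ j : Fin (m + 2), 0 < B (u j.castSucc) (u j.succ)) ∧
          0 < B (u 0) (u (Fin.last (m + 2)))),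
        (∏ j : Fin (m + 2), B (u j.castSucc) (u j.succ))
          * B (u 0) (u (Fin.last (m + 2)))) := by
    apply Finset.sum_nonneg
    intro m _
    apply Finset.sum_nonneg
    intro u hu
    simp only [Finset.mem_filter, Finset.mem_univ, true_and] at hu
    exact mul_nonneg (Finset.prod_nonneg fun j _ => (hu.2.1 j).le) hu.2.2.le
  -- connectivity gives at least n - 1 nonzero entries above the diagonal
  have hSq : (((n'+1 : ℕ) : ℤ) - 1) ≤ ∑ i : Fin (n'+1), ∑ j : Fin (n'+1), (if i < j then (B i j) ^ 2 else 0) := by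
    set G := SimpleGraph.fromRel (fun i j : Fin (n'+1) => B i j ≠ 0) with hG
    have hBsymm : ∀ i j : Fin (n'+1), B j i = -B i j := by
      intro i j
      have h : Bᵀ i j = (-B) i j := by rw [hskew]
      simpa [Matrix.transpose_apply, Matrix.neg_apply] using h
    have key : ∀ v : Fin (n'+1), v ≠ v0 → ∃ u, G.Adj v u ∧ G.dist u v0 + 1 = G.dist v v0 := by
      intro v hv
      have hd : 0 < G.dist v v0 := hconn.pos_dist_of_ne hv
      obtain ⟨p, hp⟩ := hconn.exists_walk_length_eq_dist v v0
      cases p with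
      | nil =>
        rw [SimpleGraph.Walk.length_nil] at hp
        rw [← hp] at hd
        exact absurd hd (lt_irrefl 0)
      | cons h q =>
        rename_i u
        refine ⟨u, h, ?_⟩
        have h1 : G.dist u v0 ≤ q.length := SimpleGraph.dist_le q
        have h2 : q.length + 1 = G.dist v v0 := by
          rw [← hp, SimpleGraph.Walk.length_cons]
        have h3 := hconn.dist_triangle (u := v) (v := u) (w := v0)
        have h4 : G.dist v u = 1 := SimpleGraph.dist_eq_one_iff_adj.mpr h
        linarith
    choose g hgadj hgdist using key
    set fpair : Fin (n'+1) → Fin (n'+1) × Fin (n'+1) :=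
      fun v => if h : v = v0 then (v, v) else (min v (g v h), max v (g v h)) with hfp
    set F : Finset (Fin (n'+1) × Fin (n'+1)) :=
      Finset.univ.filter (fun p => p.1 < p.2 ∧ B p.1 p.2 ≠ 0) with hF
    have hBne : ∀ (v : Fin (n'+1)) (h : v ≠ v0), B v (g v h) ≠ 0 := by
      intro v h
      have hadj' := ((SimpleGraph.fromRel_adj _ _ _).mp (hgadj v h)).2
      rcases hadj' with h' | h'
      · exact h'
      · rw [hBsymm v (g v h), neg_ne_zero] at h'
        exact h'
    have hmem : ∀ v ∈ Finset.univ.erase v0, fpair v ∈ F := by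
      intro v hv
      rw [Finset.mem_erase] at hv
      obtain ⟨hne, -⟩ := hv
      have hvne : v ≠ g v hne := (hgadj v hne).ne
      rw [hF, Finset.mem_filter]
      rw [hfp]
      simp only [dif_neg hne]
      refine ⟨Finset.mem_univ _, min_lt_max.mpr hvne, ?_⟩
      rcases le_total v (g v hne) with hle | hle
      · rw [min_eq_left hle, max_eq_right hle]
        exact hBne v hne
      · rw [min_eq_right hle, max_eq_left hle]
        rw [hBsymm v (g v hne), neg_ne_zero]
        exact hBne v hne
    have hinj : Set.InjOn fpair ↑(Finset.univ.erase v0) := by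
      intro a ha b hb hab
      rw [Finset.coe_erase, Set.mem_diff] at ha hb
      have hane : a ≠ v0 := by simpa using ha.2
      have hbne : b ≠ v0 := by simpa using hb.2
      rw [hfp] at hab
      simp only [dif_neg hane, dif_neg hbne] at hab
      have h1 : min a (g a hane) = min b (g b hbne) := congrArg Prod.fst hab
      have h2 : max a (g a hane) = max b (g b hbne) := congrArg Prod.snd hab
      by_contra hne
      have haset : a = b ∨ a = g b hbne := by
        rcases le_total a (g a hane) with h | h
        · have ha' : a = min b (g b hbne) := by rw [← h1, min_eq_left h]
          rcases le_total b (g b hbne) with h' | h'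
          · left; rw [ha', min_eq_left h']
          · right; rw [ha', min_eq_right h']
        · have ha' : a = max b (g b hbne) := by rw [← h2, max_eq_left h]
          rcases le_total b (g b hbne) with h' | h'
          · right; rw [ha', max_eq_right h']
          · left; rw [ha', max_eq_left h']
      have hbset : b = a ∨ b = g a hane := by
        rcases le_total b (g b hbne) with h | h
        · have hb' : b = min a (g a hane) := by rw [h1, min_eq_left h]
          rcases le_total a (g a hane) with h' | h'
          · left; rw [hb', min_eq_left h']
          · right; rw [hb', min_eq_right h']
        · have hb' : b = max a (g a hane) := by rw [h2, max_eq_left h]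
          rcases le_total a (g a hane) with h' | h'
          · right; rw [hb', max_eq_right h']
          · left; rw [hb', max_eq_left h']
      rcases haset with rfl | ha2
      · exact hne rfl
      rcases hbset with rfl | hb2
      · exact hne rfl
      have d1 := hgdist a hane
      have d2 := hgdist b hbne
      rw [← ha2] at d2
      rw [← hb2] at d1
      linarith
    have hcardF : n' ≤ F.card := by
      have hc := Finset.card_le_card_of_injOn fpair (fun v hv => hmem v hv) hinj
      rw [Finset.card_erase_of_mem (Finset.mem_univ v0), Finset.card_univ, Fintype.card_fin] at hc
      simpa using hc
    have h5 : (F.card : ℤ) ≤ ∑ i : Fin (n'+1), ∑ j : Fin (n'+1), (if i < j then (B i j) ^ 2 else 0) := by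
      have e : (∑ i : Fin (n'+1), ∑ j : Fin (n'+1), (if i < j then (B i j) ^ 2 else 0))
          = ∑ p ∈ Finset.univ ×ˢ Finset.univ,
              (if p.1 < p.2 then (B p.1 p.2) ^ 2 else 0) := by
        rw [Finset.sum_product]
      rw [e]
      calc (F.card : ℤ) = ∑ _p ∈ F, (1 : ℤ) := by simp
        _ ≤ ∑ p ∈ F, (if p.1 < p.2 then (B p.1 p.2) ^ 2 else 0) := by
            apply Finset.sum_le_sum
            intro p hp
            rw [hF, Finset.mem_filter] at hp
            rw [if_pos hp.2.1]
            rcases lt_or_gt_of_ne hp.2.2 with h | h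
            · nlinarith
            · nlinarith
        _ ≤ ∑ p ∈ Finset.univ ×ˢ Finset.univ, (if p.1 < p.2 then (B p.1 p.2) ^ 2 else 0) := by
            apply Finset.sum_le_sum_of_subset_of_nonneg
            · intro p _
              simp
            · intro p _ _
              split_ifs
              · exact sq_nonneg _
              · exact le_rfl
    have : ((n'+1 : ℕ) : ℤ) - 1 = (n' : ℤ) := by push_cast; ring
    rw [this]
    calc (n' : ℤ) ≤ (F.card : ℤ) := by exact_mod_cast hcardF
      _ ≤ _ := h5
  linarith [hmain, hCyc, hSq]
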